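/- For every integer n ≥ 1 and every θ ∈ (0, π), the integral ∫₀^π cos(n·u)/(cos u − cos θ) du (taken as a principal value at u = θ) equals π·sin(n·θ)/sin θ. -/

import Mathlib

open Real MeasureTheory Set Filter

noncomputable def PP (θ : ℝ) : ℕ → ℝ → ℝ
  | 0 => fun _ => 0
  | 1 => fun _ => 1
  | (n+2) => fun u => 2 * Real.cos ((n+1 : ℕ) * u) + 2 * Real.cos θ * PP θ (n+1) u - PP θ n u

lemma PP_continuous (θ : ℝ) (n : ℕ) : Continuous (PP θ n) := by
  induction n using Nat.twoStepInduction with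
  | zero => simpa [PP] using continuous_const
  | one => simpa [PP] using continuous_const
  | more n ih1 ih2 =>
    simp only [PP]
    fun_prop

lemma cos_step (a b : ℝ) : Real.cos (a + b) + Real.cos (a - b) = 2 * Real.cos a * Real.cos b := by
  rw [Real.cos_add, Real.cos_sub]; ring

lemma PP_mul (θ : ℝ) (n : ℕ) (u : ℝ) :
    PP θ n u * (Real.cos u - Real.cos θ) = Real.cos (n * u) - Real.cos (n * θ) := by
  induction n using Nat.twoStepInduction generalizing u with
  | zero => simp [PP]
  | one => simp [PP]
  | more n ih1 ih2 =>
    have h1 : Real.cos (((n:ℝ)+2) * u) = 2 * Real.cos (((n:ℝ)+1) * u) * Real.cos u - Real.cos ((n:ℝ) * u) := by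
      have := cos_step (((n:ℝ)+1) * u) u
      have e1 : ((n:ℝ)+1) * u + u = ((n:ℝ)+2) * u := by ring
      have e2 : ((n:ℝ)+1) * u - u = (n:ℝ) * u := by ring
      rw [e1, e2] at this; linarith
    have h2 : Real.cos (((n:ℝ)+2) * θ) = 2 * Real.cos (((n:ℝ)+1) * θ) * Real.cos θ - Real.cos ((n:ℝ) * θ) := by
      have := cos_step (((n:ℝ)+1) * θ) θ
      have e1 : ((n:ℝ)+1) * θ + θ = ((n:ℝ)+2) * θ := by ring
      have e2 : ((n:ℝ)+1) * θ - θ = (n:ℝ) * θ := by ring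
      rw [e1, e2] at this; linarith
    have i1 := ih1 u
    have i2 := ih2 u
    simp only [PP]
    push_cast
    push_cast at i1 i2
    linear_combination 2 * Real.cos θ * i2 - i1 - h1 + h2

lemma integral_cos_nat (k : ℕ) (hk : 1 ≤ k) :
    ∫ u in (0:ℝ)..π, Real.cos ((k:ℝ) * u) = 0 := by
  have hk0 : (k:ℝ) ≠ 0 := by positivity
  have hd : ∀ u ∈ Set.uIcc (0:ℝ) π, HasDerivAt (fun v => Real.sin ((k:ℝ) * v) / k) (Real.cos ((k:ℝ) * u)) u := by
    intro u _
    have h := ((Real.hasDerivAt_sin ((k:ℝ)*u)).comp u ((hasDerivAt_id u).const_mul (k:ℝ)))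
    simpa [mul_comm, mul_div_assoc, mul_div_cancel_right₀, hk0] using h.div_const (k:ℝ)
  rw [intervalIntegral.integral_eq_sub_of_hasDerivAt hd (by apply Continuous.intervalIntegrable; fun_prop)]
  simp [Real.sin_nat_mul_pi]

lemma PP_integral (θ : ℝ) (hs : Real.sin θ ≠ 0) (n : ℕ) :
    ∫ u in (0:ℝ)..π, PP θ n u = π * Real.sin (n * θ) / Real.sin θ := by
  induction n using Nat.twoStepInduction with
  | zero => simp [PP]
  | one => simp [PP, div_self hs, mul_div_assoc]
  | more n ih1 ih2 =>
    have hint1 : IntervalIntegrable (PP θ n) volume 0 π := (PP_continuous θ n).intervalIntegrable _ _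
    have hint2 : IntervalIntegrable (PP θ (n+1)) volume 0 π := (PP_continuous θ (n+1)).intervalIntegrable _ _
    have hintc : IntervalIntegrable (fun u => 2 * Real.cos ((n+1:ℕ) * u) + 2 * Real.cos θ * PP θ (n+1) u) volume 0 π := by
      apply Continuous.intervalIntegrable
      exact (by fun_prop : Continuous fun u => 2 * Real.cos ((n+1:ℕ) * u)).add (continuous_const.mul (PP_continuous θ (n+1)))
    have h0 : (∫ u in (0:ℝ)..π, PP θ (n+2) u) =
        (∫ u in (0:ℝ)..π, (2 * Real.cos ((n+1:ℕ) * u) + 2 * Real.cos θ * PP θ (n+1) u)) - ∫ u in (0:ℝ)..π, PP θ n u := by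
      rw [← intervalIntegral.integral_sub hintc hint1]
      rfl
    rw [h0, intervalIntegral.integral_add (μ := volume) (f := fun u => 2 * Real.cos ((n+1:ℕ) * u)) (g := fun u => 2 * Real.cos θ * PP θ (n+1) u) (by apply Continuous.intervalIntegrable; fun_prop)
      ((continuous_const.mul (PP_continuous θ (n+1))).intervalIntegrable _ _),
      intervalIntegral.integral_const_mul, intervalIntegral.integral_const_mul,
      integral_cos_nat (n+1) (by omega), ih2, ih1]
    have hsin : Real.sin (((n:ℝ)+2) * θ) = 2 * Real.cos θ * Real.sin (((n:ℝ)+1) * θ) - Real.sin ((n:ℝ) * θ) := by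
      have h1 : ((n:ℝ)+2) * θ = ((n:ℝ)+1) * θ + θ := by ring
      have h2 : (n:ℝ) * θ = ((n:ℝ)+1) * θ - θ := by ring
      rw [h1, h2, Real.sin_add, Real.sin_sub]; ring
    push_cast
    rw [hsin]
    ring

noncomputable def FF (θ u : ℝ) : ℝ :=
  (Real.log (Real.sin ((θ + u) / 2)) - Real.log (Real.sin ((θ - u) / 2))) / Real.sin θ

lemma FF_aux (ca sa cb sb s : ℝ) (ha : sa ≠ 0) (hb : sb ≠ 0) (hs : s ≠ 0)
    (h : s = sa * cb + ca * sb) :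
    1 / (2 * sa * sb) = (ca / sa * (1/2) - cb / sb * (-(1/2))) / s := by
  subst h
  field_simp
  rw [eq_div_iff (by convert hs using 1; ring)]; ring

lemma hasDerivAt_FF (θ : ℝ) (hs : Real.sin θ ≠ 0) (t : ℝ)
    (h1 : Real.sin ((θ + t) / 2) ≠ 0) (h2 : Real.sin ((θ - t) / 2) ≠ 0) :
    HasDerivAt (FF θ) (1 / (Real.cos t - Real.cos θ)) t := by
  set A := (θ + t) / 2 with hA
  set B := (θ - t) / 2 with hB
  have dA : HasDerivAt (fun u : ℝ => (θ + u) / 2) (1/2) t := by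
    simpa using ((hasDerivAt_id t).const_add θ).div_const 2
  have dB : HasDerivAt (fun u : ℝ => (θ - u) / 2) (-(1/2)) t := by
    have := ((hasDerivAt_id t).const_sub θ).div_const 2
    simpa [neg_div] using this
  have dlogA : HasDerivAt (fun u : ℝ => Real.log (Real.sin ((θ + u) / 2)))
      (Real.cos A / Real.sin A * (1/2)) t :=
    by have h := ((Real.hasDerivAt_log h1).comp t ((Real.hasDerivAt_sin A).comp t dA)); exact h.congr_deriv (by ring)
  have dlogB : HasDerivAt (fun u : ℝ => Real.log (Real.sin ((θ - u) / 2)))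
      (Real.cos B / Real.sin B * (-(1/2))) t :=
    by have h := ((Real.hasDerivAt_log h2).comp t ((Real.hasDerivAt_sin B).comp t dB)); exact h.congr_deriv (by ring)
  have hmain : HasDerivAt (FF θ)
      ((Real.cos A / Real.sin A * (1/2) - Real.cos B / Real.sin B * (-(1/2))) / Real.sin θ) t :=
    (dlogA.sub dlogB).div_const _
  have hd : Real.cos t - Real.cos θ = 2 * Real.sin A * Real.sin B := by
    rw [Real.cos_sub_cos]
    have e1 : (t + θ) / 2 = A := by rw [hA]; ring
    have e2 : (t - θ) / 2 = -B := by rw [hB]; ring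
    rw [e1, e2, Real.sin_neg]; ring
  have hsθ : Real.sin θ = Real.sin A * Real.cos B + Real.cos A * Real.sin B := by
    rw [← Real.sin_add]
    congr 1
    rw [hA, hB]; ring
  convert hmain using 1
  rw [hd]
  exact FF_aux _ _ _ _ _ h1 h2 hs hsθ


/-- For `n ≥ 1` and `θ ∈ (0,π)`, the principal-value integral
`∫₀^π cos(nu)/(cos u − cos θ) du = π sin(nθ)/sin θ`, the principal value being
the limit as `ε → 0⁺` of the integral over `[0,π]` with the `ε`-neighbourhood
of the singularity `u = θ` removed. -/
theorem pv_cos_integral (n : ℕ) (hn : 1 ≤ n) (θ : ℝ) (hθ : θ ∈ Set.Ioo 0 π) :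
    Tendsto (fun ε : ℝ =>
        (∫ u in (0:ℝ)..(θ - ε), Real.cos (n * u) / (Real.cos u - Real.cos θ)) +
        ∫ u in (θ + ε)..π, Real.cos (n * u) / (Real.cos u - Real.cos θ))
      (nhdsWithin 0 (Set.Ioi 0))
      (nhds (π * Real.sin (n * θ) / Real.sin θ)) := by
  obtain ⟨hθ0, hθπ⟩ := hθ
  have hπ := Real.pi_pos
  have hsin : 0 < Real.sin θ := Real.sin_pos_of_pos_of_lt_pi hθ0 hθπ
  have hsne : Real.sin θ ≠ 0 := hsin.ne'
  have hplus : ∀ t : ℝ, 0 ≤ t → t ≤ π → Real.sin ((θ + t)/2) ≠ 0 := by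
    intro t h0 h1
    have ha : 0 < (θ + t)/2 := by linarith
    have hb : (θ + t)/2 < π := by linarith
    exact (Real.sin_pos_of_pos_of_lt_pi ha hb).ne'
  have hminus : ∀ t : ℝ, 0 ≤ t → t ≤ π → t ≠ θ → Real.sin ((θ - t)/2) ≠ 0 := by
    intro t h0 h1 hne
    rw [Ne, Real.sin_eq_zero_iff_of_lt_of_lt (by linarith) (by linarith)]
    intro h
    exact hne (by linarith)
  have hden : ∀ t : ℝ, 0 ≤ t → t ≤ π → t ≠ θ → Real.cos t - Real.cos θ ≠ 0 := by
    intro t h0 h1 hne h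
    exact hne (Real.injOn_cos ⟨h0, h1⟩ ⟨hθ0.le, hθπ.le⟩ (by linarith))
  set c := Real.cos (n * θ) with hc
  have hPPcont := PP_continuous θ n
  have hPPint : ∀ a b : ℝ, IntervalIntegrable (PP θ n) volume a b :=
    fun a b => hPPcont.intervalIntegrable a b
  have hTend : Tendsto (fun ε : ℝ =>
      ((∫ u in (0:ℝ)..(θ - ε), PP θ n u) + ∫ u in (θ + ε)..π, PP θ n u)
      + c * ((Real.log (Real.sin (θ - ε/2)) - Real.log (Real.sin (θ + ε/2))) / Real.sin θ))
      (nhdsWithin 0 (Set.Ioi 0)) (nhds (π * Real.sin (n * θ) / Real.sin θ)) := by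
    have t1 : Tendsto (fun ε : ℝ => ∫ u in (0:ℝ)..(θ - ε), PP θ n u) (nhds 0)
        (nhds (∫ u in (0:ℝ)..θ, PP θ n u)) := by
      have hcont := intervalIntegral.continuous_primitive hPPint 0
      have hsub : Tendsto (fun ε : ℝ => θ - ε) (nhds 0) (nhds θ) := by
        have h : Tendsto (fun ε : ℝ => θ - ε) (nhds 0) (nhds (θ - 0)) := (continuous_const.sub continuous_id').tendsto (0:ℝ); rwa [sub_zero] at h
      exact (hcont.tendsto θ).comp hsub
    have t2 : Tendsto (fun ε : ℝ => ∫ u in (θ + ε)..π, PP θ n u) (nhds 0)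
        (nhds (∫ u in θ..π, PP θ n u)) := by
      have hcont : Continuous fun a : ℝ => ∫ u in a..π, PP θ n u := by
        have := (intervalIntegral.continuous_primitive hPPint π).neg
        have heq : (fun a : ℝ => -∫ u in π..a, PP θ n u) = fun a : ℝ => ∫ u in a..π, PP θ n u := by
          funext a
          rw [intervalIntegral.integral_symm, neg_neg]
        rw [← heq]; exact this
      have hadd : Tendsto (fun ε : ℝ => θ + ε) (nhds 0) (nhds θ) := by
        have h : Tendsto (fun ε : ℝ => θ + ε) (nhds 0) (nhds (θ + 0)) := (continuous_const.add continuous_id').tendsto (0:ℝ); rwa [add_zero] at h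
      exact (hcont.tendsto θ).comp hadd
    have t3 : Tendsto (fun ε : ℝ =>
        (Real.log (Real.sin (θ - ε/2)) - Real.log (Real.sin (θ + ε/2))) / Real.sin θ)
        (nhds 0) (nhds 0) := by
      have c1 : ContinuousAt (fun ε : ℝ => Real.log (Real.sin (θ - ε/2))) 0 := by
        apply ContinuousAt.comp (g := Real.log)
        · apply Real.continuousAt_log
          simpa using hsne
        · fun_prop
      have c2 : ContinuousAt (fun ε : ℝ => Real.log (Real.sin (θ + ε/2))) 0 := by
        apply ContinuousAt.comp (g := Real.log)
        · apply Real.continuousAt_log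
          simpa using hsne
        · fun_prop
      have := ((c1.sub c2).div_const (Real.sin θ)).tendsto
      simpa using this
    have hcomb := ((t1.add t2).add (t3.const_mul c)).mono_left (nhdsWithin_le_nhds (s := Set.Ioi (0:ℝ)))
    have heq : ((∫ u in (0:ℝ)..θ, PP θ n u) + ∫ u in θ..π, PP θ n u) + c * 0
        = π * Real.sin (n * θ) / Real.sin θ := by
      rw [intervalIntegral.integral_add_adjacent_intervals (hPPint 0 θ) (hPPint θ π),
        PP_integral θ hsne n]
      ring
    rwa [heq] at hcomb
  apply hTend.congr'
  have hδ : (0:ℝ) < min θ (π - θ) := lt_min hθ0 (by linarith)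
  filter_upwards [Ioo_mem_nhdsGT_of_mem (show (0:ℝ) ∈ Set.Ico 0 (min θ (π-θ)) from ⟨le_refl 0, hδ⟩)]
    with ε hε
  obtain ⟨hε0, hεδ⟩ := hε
  have hεθ : ε < θ := lt_of_lt_of_le hεδ (min_le_left _ _)
  have hεπ : ε < π - θ := lt_of_lt_of_le hεδ (min_le_right _ _)
  have hb1 : (0:ℝ) ≤ θ - ε := by linarith
  have hb2 : θ - ε ≤ π := by linarith
  have ha1 : θ + ε ≤ π := by linarith
  have ha0 : (0:ℝ) ≤ θ + ε := by linarith
  have uI1 : Set.uIcc (0:ℝ) (θ - ε) = Set.Icc 0 (θ - ε) := Set.uIcc_of_le hb1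
  have uI2 : Set.uIcc (θ + ε) π = Set.Icc (θ + ε) π := Set.uIcc_of_le ha1
  have hmemL : ∀ u ∈ Set.Icc (0:ℝ) (θ - ε), u ≠ θ := by
    intro u hu h
    obtain ⟨_, h2⟩ := hu
    rw [h] at h2
    linarith
  have hmemR : ∀ u ∈ Set.Icc (θ + ε) π, u ≠ θ := by
    intro u hu h
    obtain ⟨h1, _⟩ := hu
    rw [h] at h1
    linarith
  have hdL : ∀ u ∈ Set.Icc (0:ℝ) (θ - ε), Real.cos u - Real.cos θ ≠ 0 :=
    fun u hu => hden u hu.1 (le_trans hu.2 hb2) (hmemL u hu)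
  have hdR : ∀ u ∈ Set.Icc (θ + ε) π, Real.cos u - Real.cos θ ≠ 0 :=
    fun u hu => hden u (le_trans ha0 hu.1) hu.2 (hmemR u hu)
  have hcL : ContinuousOn (fun u => c * (1 / (Real.cos u - Real.cos θ))) (Set.Icc (0:ℝ) (θ - ε)) :=
    continuousOn_const.mul (continuousOn_const.div
      ((Real.continuous_cos.continuousOn).sub continuousOn_const) hdL)
  have hcR : ContinuousOn (fun u => c * (1 / (Real.cos u - Real.cos θ))) (Set.Icc (θ + ε) π) :=
    continuousOn_const.mul (continuousOn_const.div
      ((Real.continuous_cos.continuousOn).sub continuousOn_const) hdR)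
  have split1 : (∫ u in (0:ℝ)..(θ-ε), Real.cos (n * u) / (Real.cos u - Real.cos θ))
      = (∫ u in (0:ℝ)..(θ-ε), PP θ n u)
        + ∫ u in (0:ℝ)..(θ-ε), c * (1/(Real.cos u - Real.cos θ)) := by
    rw [← intervalIntegral.integral_add (hPPint _ _)
      ((uI1 ▸ hcL : ContinuousOn _ (Set.uIcc (0:ℝ) (θ-ε))).intervalIntegrable)]
    apply intervalIntegral.integral_congr
    intro u hu
    rw [uI1] at hu
    have hd := hdL u hu
    have hcn : Real.cos (n*u) = PP θ n u * (Real.cos u - Real.cos θ) + c := by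
      rw [hc]
      linarith [PP_mul θ n u]
    show Real.cos (n*u) / (Real.cos u - Real.cos θ) = PP θ n u + c * (1/(Real.cos u - Real.cos θ))
    rw [hcn]
    field_simp
  have split2 : (∫ u in (θ+ε)..π, Real.cos (n * u) / (Real.cos u - Real.cos θ))
      = (∫ u in (θ+ε)..π, PP θ n u)
        + ∫ u in (θ+ε)..π, c * (1/(Real.cos u - Real.cos θ)) := by
    rw [← intervalIntegral.integral_add (hPPint _ _)
      ((uI2 ▸ hcR : ContinuousOn _ (Set.uIcc (θ+ε) π)).intervalIntegrable)]
    apply intervalIntegral.integral_congr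
    intro u hu
    rw [uI2] at hu
    have hd := hdR u hu
    have hcn : Real.cos (n*u) = PP θ n u * (Real.cos u - Real.cos θ) + c := by
      rw [hc]
      linarith [PP_mul θ n u]
    show Real.cos (n*u) / (Real.cos u - Real.cos θ) = PP θ n u + c * (1/(Real.cos u - Real.cos θ))
    rw [hcn]
    field_simp
  have ftc1 : (∫ u in (0:ℝ)..(θ-ε), 1/(Real.cos u - Real.cos θ)) = FF θ (θ - ε) - FF θ 0 := by
    apply intervalIntegral.integral_eq_sub_of_hasDerivAt
    · intro t ht
      rw [uI1] at ht
      exact hasDerivAt_FF θ hsne t (hplus t ht.1 (le_trans ht.2 hb2))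
        (hminus t ht.1 (le_trans ht.2 hb2) (hmemL t ht))
    · apply ContinuousOn.intervalIntegrable
      rw [uI1]
      exact continuousOn_const.div ((Real.continuous_cos.continuousOn).sub continuousOn_const) hdL
  have ftc2 : (∫ u in (θ+ε)..π, 1/(Real.cos u - Real.cos θ)) = FF θ π - FF θ (θ + ε) := by
    apply intervalIntegral.integral_eq_sub_of_hasDerivAt
    · intro t ht
      rw [uI2] at ht
      exact hasDerivAt_FF θ hsne t (hplus t (le_trans ha0 ht.1) ht.2)
        (hminus t (le_trans ha0 ht.1) ht.2 (hmemR t ht))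
    · apply ContinuousOn.intervalIntegrable
      rw [uI2]
      exact continuousOn_const.div ((Real.continuous_cos.continuousOn).sub continuousOn_const) hdR
  have FF0 : FF θ 0 = 0 := by simp [FF]
  have FFπ : FF θ π = 0 := by
    have h1 : (θ + π)/2 = π - (π - θ)/2 := by ring
    have h2 : (θ - π)/2 = -((π - θ)/2) := by ring
    rw [FF, h1, h2, Real.sin_pi_sub, Real.sin_neg, Real.log_neg_eq_log, sub_self, zero_div]
  have FFa : FF θ (θ - ε) = (Real.log (Real.sin (θ - ε/2)) - Real.log (Real.sin (ε/2))) / Real.sin θ := by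
    have e1 : (θ + (θ - ε))/2 = θ - ε/2 := by ring
    have e2 : (θ - (θ - ε))/2 = ε/2 := by ring
    rw [FF, e1, e2]
  have FFb : FF θ (θ + ε) = (Real.log (Real.sin (θ + ε/2)) - Real.log (Real.sin (ε/2))) / Real.sin θ := by
    have e1 : (θ + (θ + ε))/2 = θ + ε/2 := by ring
    have e2 : (θ - (θ + ε))/2 = -(ε/2) := by ring
    rw [FF, e1, e2, Real.sin_neg, Real.log_neg_eq_log]
  rw [split1, split2, intervalIntegral.integral_const_mul, intervalIntegral.integral_const_mul,
    ftc1, ftc2, FF0, FFπ, FFa, FFb]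
  ring
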